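/- Let J be an infinite profinite group which is pro-p (so J has open normal subgroups of index p^n with n → ∞). Then the module of J-coinvariants of the smooth representation C_c^∞(J, Z) of J (locally constant compactly supported Z-valued functions on J, with J acting by left translation) is isomorphic to Z[1/p], via the Haar measure normalized so that the characteristic function of J has measure 1. -/

import Mathlib

set_option linter.unusedSectionVars false


/-- Left translation of a locally constant `ℤ`-valued function on a topological group:
`(h • f)(x) = f (h⁻¹ x)`. -/
def leftTranslate {J : Type*} [Group J] [TopologicalSpace J] [IsTopologicalGroup J]
    (h : J) (f : LocallyConstant J ℤ) : LocallyConstant J ℤ :=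
  ⟨fun x => f (h⁻¹ * x),
    f.isLocallyConstant.comp_continuous (continuous_const.mul continuous_id)⟩

/-- The subgroup of `C_c^∞(J, ℤ) = LocallyConstant J ℤ` (for `J` compact every locally
constant function has compact support) generated by the elements `h • f - f`; the
quotient by it is the module of `J`-coinvariants. -/
def coinvariantsSub (J : Type*) [Group J] [TopologicalSpace J] [IsTopologicalGroup J] :
    AddSubgroup (LocallyConstant J ℤ) :=
  AddSubgroup.closure {x | ∃ (h : J) (f : LocallyConstant J ℤ), x = leftTranslate h f - f}

section Aux

variable {J : Type*} [Group J] [TopologicalSpace J] [IsTopologicalGroup J] [CompactSpace J]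

/-- The subgroup of elements `g` such that `f` is invariant under right translation by `g`. -/
def stab (f : LocallyConstant J ℤ) : Subgroup J where
  carrier := {g | ∀ x, f (x * g) = f x}
  one_mem' := fun x => by rw [mul_one]
  mul_mem' := fun {a b} ha hb x => by rw [← mul_assoc, hb, ha]
  inv_mem' := fun {a} ha x => by
    have := ha (x * a⁻¹); rw [mul_assoc, inv_mul_cancel, mul_one] at this; exact this.symm

theorem mem_stab {f : LocallyConstant J ℤ} {g : J} : g ∈ stab f ↔ ∀ x, f (x * g) = f x :=
  Iff.rfl

/-- uniform continuity of a locally constant function on a compact group -/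
theorem exists_nhd_const (f : LocallyConstant J ℤ) :
    ∃ V : Set J, IsOpen V ∧ (1 : J) ∈ V ∧ ∀ x, ∀ v ∈ V, f (x * v) = f x := by
  have key : ∀ x : J, ∃ V : Set J, IsOpen V ∧ (1 : J) ∈ V ∧
      ∀ a ∈ V, ∀ b ∈ V, f (x * a * b) = f x := by
    intro x
    have hU : IsOpen {y | f y = f x} := f.isLocallyConstant.isOpen_fiber (f x)
    have hcont : Continuous (fun q : J × J => x * q.1 * q.2) := by continuity
    have hop : IsOpen ((fun q : J × J => x * q.1 * q.2) ⁻¹' {y | f y = f x}) :=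
      hU.preimage hcont
    have hmem : ((1 : J), (1 : J)) ∈ (fun q : J × J => x * q.1 * q.2) ⁻¹' {y | f y = f x} := by
      simp
    obtain ⟨V₁, V₂, hV₁, hV₂, h1V₁, h1V₂, hsub⟩ := isOpen_prod_iff.mp hop 1 1 hmem
    refine ⟨V₁ ∩ V₂, hV₁.inter hV₂, ⟨h1V₁, h1V₂⟩, fun a ha b hb => ?_⟩
    exact hsub (Set.mk_mem_prod ha.1 hb.2)
  choose V hVo h1V hV using key
  have hcover : (Set.univ : Set J) ⊆ ⋃ x : J, (fun y => x⁻¹ * y) ⁻¹' (V x) := by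
    intro x _
    exact Set.mem_iUnion.mpr ⟨x, by simp [h1V x]⟩
  obtain ⟨t, ht⟩ := isCompact_univ.elim_finite_subcover
    (fun x : J => (fun y => x⁻¹ * y) ⁻¹' (V x))
    (fun x => (hVo x).preimage (by continuity)) hcover
  refine ⟨⋂ i ∈ t, V i, isOpen_biInter_finset (fun i _ => hVo i), ?_, ?_⟩
  · exact Set.mem_biInter (fun i _ => h1V i)
  · intro x v hv
    obtain ⟨i, hi, hxi⟩ : ∃ i ∈ t, i⁻¹ * x ∈ V i := by
      have := ht (Set.mem_univ x)
      simpa using this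
    have hvVi : v ∈ V i := by simpa using (Set.mem_iInter₂.mp hv i hi)
    have h1 : f (i * (i⁻¹ * x) * v) = f i := hV i _ hxi v hvVi
    have h2 : f (i * (i⁻¹ * x) * 1) = f i := hV i _ hxi 1 (h1V i)
    rw [mul_inv_cancel_left] at h1 h2
    rw [mul_one] at h2
    rw [h1, h2]

theorem stab_isOpen (f : LocallyConstant J ℤ) : IsOpen ((stab f : Set J)) := by
  obtain ⟨V, hVo, h1V, hV⟩ := exists_nhd_const f
  exact Subgroup.isOpen_of_mem_nhds _
    (Filter.mem_of_superset (hVo.mem_nhds h1V) (fun v hv => fun x => hV x v hv))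

/-- descend `f` to the quotient -/
def qlift (f : LocallyConstant J ℤ) (N : Subgroup J) (hN : N ≤ stab f) : J ⧸ N → ℤ :=
  fun y => Quotient.liftOn' y f (fun a b hab => by
    have h : a⁻¹ * b ∈ N := QuotientGroup.leftRel_apply.mp hab
    have := (hN h) a
    rw [mul_inv_cancel_left] at this
    exact this.symm)

@[simp] theorem qlift_mk (f : LocallyConstant J ℤ) (N : Subgroup J) (hN : N ≤ stab f) (g : J) :
    qlift f N hN (QuotientGroup.mk g) = f g := rfl

noncomputable def intAux (f : LocallyConstant J ℤ) (N : Subgroup J) (hN : N ≤ stab f)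
    (hO : IsOpen (N : Set J)) : ℚ :=
  letI : Finite (J ⧸ N) := N.quotient_finite_of_isOpen hO
  letI : Fintype (J ⧸ N) := Fintype.ofFinite _
  ((∑ y : J ⧸ N, qlift f N hN y : ℤ) : ℚ) / (N.index : ℚ)

theorem intAux_eq_of_le (f : LocallyConstant J ℤ) (M N : Subgroup J) (hMN : M ≤ N)
    (hN : N ≤ stab f) (hMo : IsOpen (M : Set J)) (hNo : IsOpen (N : Set J)) :
    intAux f M (hMN.trans hN) hMo = intAux f N hN hNo := by
  letI : Finite (J ⧸ M) := M.quotient_finite_of_isOpen hMo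
  letI : Fintype (J ⧸ M) := Fintype.ofFinite _
  letI : Finite (J ⧸ N) := N.quotient_finite_of_isOpen hNo
  letI : Fintype (J ⧸ N) := Fintype.ofFinite _
  letI e := Subgroup.quotientEquivProdOfLE hMN
  letI : Finite ((J ⧸ N) × N ⧸ M.subgroupOf N) := Finite.of_equiv _ e
  letI : Finite (N ⧸ M.subgroupOf N) :=
    Finite.of_injective (fun w => (((1 : J) : J ⧸ N), w))
      (fun a b hab => (Prod.mk.injEq _ _ _ _ ▸ hab).2)
  letI : Fintype (N ⧸ M.subgroupOf N) := Fintype.ofFinite _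
  have hval : ∀ y : J ⧸ M, qlift f M (hMN.trans hN) y = qlift f N hN (e y).1 := by
    intro y
    induction y using Quotient.inductionOn' with
    | h g => rfl
  have hsum : (∑ y : J ⧸ M, qlift f M (hMN.trans hN) y)
      = (Fintype.card (N ⧸ M.subgroupOf N)) * ∑ z : J ⧸ N, qlift f N hN z := by
    calc (∑ y : J ⧸ M, qlift f M (hMN.trans hN) y)
        = ∑ y : J ⧸ M, qlift f N hN (e y).1 := Finset.sum_congr rfl (fun y _ => hval y)
      _ = ∑ x : (J ⧸ N) × N ⧸ M.subgroupOf N, qlift f N hN x.1 :=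
          (Equiv.sum_comp e (fun x => qlift f N hN x.1))
      _ = ∑ z : J ⧸ N, ∑ _w : N ⧸ M.subgroupOf N, qlift f N hN z := by
          rw [Fintype.sum_prod_type]
      _ = ∑ z : J ⧸ N, (Fintype.card (N ⧸ M.subgroupOf N) : ℤ) * qlift f N hN z := by
          simp [Finset.sum_const, nsmul_eq_mul]
      _ = _ := by rw [← Finset.mul_sum]
  have hind : (M.index : ℚ) = (Fintype.card (N ⧸ M.subgroupOf N)) * (N.index : ℚ) := by
    have h : M.index = N.index * Fintype.card (N ⧸ M.subgroupOf N) := by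
      rw [Subgroup.index, Subgroup.index, Nat.card_congr e, Nat.card_prod,
        Nat.card_eq_fintype_card, Nat.card_eq_fintype_card]
    rw [h]; push_cast; ring
  have hc : (Fintype.card (N ⧸ M.subgroupOf N) : ℚ) ≠ 0 := by
    exact_mod_cast Fintype.card_ne_zero
  have hNind : (N.index : ℚ) ≠ 0 := by
    have : N.index ≠ 0 := by
      have : Nat.card (J ⧸ N) ≠ 0 := Nat.card_ne_zero.mpr ⟨⟨QuotientGroup.mk 1⟩, inferInstance⟩
      exact this
    exact_mod_cast this
  unfold intAux
  rw [hsum]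
  push_cast
  rw [hind, mul_div_mul_left _ _ hc]

open scoped Classical

noncomputable def phi (f : LocallyConstant J ℤ) : ℚ :=
  intAux f (stab f) le_rfl (stab_isOpen f)

theorem phi_eq (f : LocallyConstant J ℤ) (N : Subgroup J) (hN : N ≤ stab f)
    (hO : IsOpen (N : Set J)) : phi f = intAux f N hN hO :=
  (intAux_eq_of_le f N (stab f) hN le_rfl hO (stab_isOpen f)).symm

theorem phi_add (f g : LocallyConstant J ℤ) : phi (f + g) = phi f + phi g := by
  set N := stab f ⊓ stab g with hNdef
  have hO : IsOpen (N : Set J) := by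
    have : (N : Set J) = (stab f : Set J) ∩ (stab g : Set J) := rfl
    rw [this]; exact (stab_isOpen f).inter (stab_isOpen g)
  have hNf : N ≤ stab f := inf_le_left
  have hNg : N ≤ stab g := inf_le_right
  have hNfg : N ≤ stab (f + g) := by
    intro a ha x
    have h1 := hNf ha x
    have h2 := hNg ha x
    simp only [LocallyConstant.add_apply, h1, h2]
  rw [phi_eq (f + g) N hNfg hO, phi_eq f N hNf hO, phi_eq g N hNg hO]
  letI : Finite (J ⧸ N) := N.quotient_finite_of_isOpen hO
  letI : Fintype (J ⧸ N) := Fintype.ofFinite _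
  unfold intAux
  have hq : ∀ y : J ⧸ N, qlift (f + g) N hNfg y = qlift f N hNf y + qlift g N hNg y := by
    intro y; induction y using Quotient.inductionOn' with
    | h a => rfl
  rw [Finset.sum_congr rfl (fun y _ => hq y), Finset.sum_add_distrib]
  push_cast
  rw [add_div]

theorem stab_leftTranslate (h : J) (f : LocallyConstant J ℤ) :
    stab (leftTranslate h f) = stab f := by
  ext g
  constructor <;> intro hg x
  · have := hg (h * x)
    simpa [leftTranslate, mul_assoc] using this
  · simp only [leftTranslate, LocallyConstant.coe_mk]
    rw [← mul_assoc]
    exact hg (h⁻¹ * x)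

theorem phi_leftTranslate (h : J) (f : LocallyConstant J ℤ) :
    phi (leftTranslate h f) = phi f := by
  set N := stab f with hNdef
  have hO : IsOpen (N : Set J) := stab_isOpen f
  have hNt : N ≤ stab (leftTranslate h f) := (stab_leftTranslate h f).ge
  rw [phi_eq (leftTranslate h f) N hNt hO, phi_eq f N le_rfl hO]
  letI : Finite (J ⧸ N) := N.quotient_finite_of_isOpen hO
  letI : Fintype (J ⧸ N) := Fintype.ofFinite _
  unfold intAux
  congr 1
  -- translation equiv on the quotient
  letI tau : J ⧸ N ≃ J ⧸ N :=
    Quotient.congr (Equiv.mulLeft h⁻¹) (by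
      intro a b
      rw [QuotientGroup.leftRel_apply, QuotientGroup.leftRel_apply]
      constructor <;> intro hab
      · simpa [mul_assoc] using hab
      · simpa [mul_assoc] using hab)
  have hq : ∀ y : J ⧸ N, qlift (leftTranslate h f) N hNt y = qlift f N le_rfl (tau y) := by
    intro y; induction y using Quotient.inductionOn' with
    | h a => rfl
  rw [Finset.sum_congr rfl (fun y _ => hq y)]
  rw [Equiv.sum_comp tau (qlift f N le_rfl)]

theorem phi_const_one : phi (LocallyConstant.const J (1 : ℤ)) = 1 := by
  have hN : (⊤ : Subgroup J) ≤ stab (LocallyConstant.const J (1 : ℤ)) := fun a _ x => rfl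
  have hO : IsOpen ((⊤ : Subgroup J) : Set J) := by
    rw [Subgroup.coe_top]; exact isOpen_univ
  rw [phi_eq _ ⊤ hN hO]
  letI : Finite (J ⧸ (⊤ : Subgroup J)) := Subgroup.quotient_finite_of_isOpen _ hO
  letI : Fintype (J ⧸ (⊤ : Subgroup J)) := Fintype.ofFinite _
  unfold intAux
  have hq : ∀ y : J ⧸ (⊤ : Subgroup J), qlift (LocallyConstant.const J (1 : ℤ)) ⊤ hN y = 1 := by
    intro y; induction y using Quotient.inductionOn' with
    | h a => rfl
  rw [Finset.sum_congr rfl (fun y _ => hq y), Finset.sum_const]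
  have hcard : Fintype.card (J ⧸ (⊤ : Subgroup J)) = 1 := by
    rw [← Nat.card_eq_fintype_card]
    exact Subgroup.index_top
  simp [Finset.card_univ, hcard, Subgroup.index_top]

/-- The indicator function of an open subgroup as a locally constant function. -/
noncomputable def indLC (N : Subgroup J) (hO : IsOpen (N : Set J)) : LocallyConstant J ℤ :=
  ⟨fun x => if x ∈ N then 1 else 0, by
    intro s
    have hcl : IsClosed (N : Set J) := Subgroup.isClosed_of_isOpen N hO
    by_cases h1 : (1 : ℤ) ∈ s <;> by_cases h0 : (0 : ℤ) ∈ s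
    · have : (fun x => if x ∈ N then (1:ℤ) else 0) ⁻¹' s = Set.univ := by
        ext x; by_cases hx : x ∈ N <;> simp [hx, h1, h0]
      rw [this]; exact isOpen_univ
    · have : (fun x => if x ∈ N then (1:ℤ) else 0) ⁻¹' s = (N : Set J) := by
        ext x; by_cases hx : x ∈ N <;> simp [hx, h1, h0]
      rw [this]; exact hO
    · have : (fun x => if x ∈ N then (1:ℤ) else 0) ⁻¹' s = (N : Set J)ᶜ := by
        ext x; by_cases hx : x ∈ N <;> simp [hx, h1, h0]
      rw [this]; exact hcl.isOpen_compl
    · have : (fun x => if x ∈ N then (1:ℤ) else 0) ⁻¹' s = ∅ := by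
        ext x; by_cases hx : x ∈ N <;> simp [hx, h1, h0]
      rw [this]; exact isOpen_empty⟩

theorem indLC_apply (N : Subgroup J) (hO : IsOpen (N : Set J)) (x : J) :
    indLC N hO x = if x ∈ N then 1 else 0 := rfl

theorem stab_indLC (N : Subgroup J) (hO : IsOpen (N : Set J)) : N ≤ stab (indLC N hO) := by
  intro g hg x
  simp only [indLC_apply]
  rw [mul_mem_cancel_right hg]

theorem phi_indLC (N : Subgroup J) (hO : IsOpen (N : Set J)) :
    phi (indLC N hO) = 1 / (N.index : ℚ) := by
  rw [phi_eq _ N (stab_indLC N hO) hO]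
  letI : Finite (J ⧸ N) := N.quotient_finite_of_isOpen hO
  letI : Fintype (J ⧸ N) := Fintype.ofFinite _
  unfold intAux
  have hq : ∀ y : J ⧸ N, qlift (indLC N hO) N (stab_indLC N hO) y
      = if y = ((1 : J) : J ⧸ N) then 1 else 0 := by
    intro y; induction y using Quotient.inductionOn' with
    | h a =>
      have : qlift (indLC N hO) N (stab_indLC N hO) (Quotient.mk'' a) = if a ∈ N then 1 else 0 :=
        rfl
      rw [this]
      have heq : (Quotient.mk'' a : J ⧸ N) = ((1 : J) : J ⧸ N) ↔ a ∈ N := by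
        show (QuotientGroup.mk a : J ⧸ N) = _ ↔ _
        rw [QuotientGroup.eq]
        simp
      by_cases ha : a ∈ N <;> simp [ha, heq]
  rw [Finset.sum_congr rfl (fun y _ => hq y), Finset.sum_ite_eq' Finset.univ ((1:J) : J ⧸ N)
    (fun _ => (1:ℤ))]
  simp

/-- φ as an `AddMonoidHom`. -/
noncomputable def Phi : LocallyConstant J ℤ →+ ℚ := AddMonoidHom.mk' phi phi_add

theorem Phi_apply (f : LocallyConstant J ℤ) : Phi f = phi f := rfl

theorem coinvariants_le_ker_Phi : coinvariantsSub J ≤ (Phi (J := J)).ker := by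
  rw [coinvariantsSub, AddSubgroup.closure_le]
  rintro x ⟨h, f, rfl⟩
  simp only [SetLike.mem_coe, AddMonoidHom.mem_ker, map_sub, Phi_apply, phi_leftTranslate, sub_self]

theorem index_ne_zero {N : Subgroup J} (hO : IsOpen (N : Set J)) : N.index ≠ 0 := by
  letI : Finite (J ⧸ N) := N.quotient_finite_of_isOpen hO
  exact Nat.card_ne_zero.mpr ⟨⟨QuotientGroup.mk 1⟩, inferInstance⟩

theorem mem_coinvariants_of_phi_eq_zero (f : LocallyConstant J ℤ) (hf : phi f = 0) :
    f ∈ coinvariantsSub J := by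
  set N := stab f with hNdef
  have hO : IsOpen (N : Set J) := stab_isOpen f
  letI : Finite (J ⧸ N) := N.quotient_finite_of_isOpen hO
  letI : Fintype (J ⧸ N) := Fintype.ofFinite _
  set c : J ⧸ N → ℤ := qlift f N le_rfl with hc
  set T : J ⧸ N → LocallyConstant J ℤ :=
    fun y => leftTranslate y.out (indLC N hO) with hT
  have hTval : ∀ (y : J ⧸ N) (x : J), T y x = if ((x : J ⧸ N) = y) then 1 else 0 := by
    intro y x
    have h1 : T y x = if (y.out)⁻¹ * x ∈ N then 1 else 0 := rfl
    have hcond : ((y.out)⁻¹ * x ∈ N) ↔ ((x : J ⧸ N) = y) := by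
      rw [← QuotientGroup.eq, QuotientGroup.out_eq']
      exact eq_comm
    rw [h1, if_congr hcond rfl rfl]
  have hdecomp : f = ∑ y : J ⧸ N, c y • T y := by
    ext x
    have happ : (∑ y : J ⧸ N, c y • T y) x
        = ∑ y : J ⧸ N, c y * T y x := by
      rw [← LocallyConstant.coeFnAddMonoidHom_apply, map_sum, Finset.sum_apply]
      apply Finset.sum_congr rfl
      intro y _
      rfl
    rw [happ]
    rw [Finset.sum_congr rfl (fun y _ => by rw [hTval y x])]
    simp only [mul_ite, mul_one, mul_zero]
    rw [Finset.sum_ite_eq Finset.univ ((x : J ⧸ N)) c]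
    simp only [Finset.mem_univ, if_true]
    rfl
  have hsum0 : (∑ y : J ⧸ N, c y) = 0 := by
    have hphi : phi f = ((∑ y : J ⧸ N, c y : ℤ) : ℚ) / (N.index : ℚ) := by
      rw [phi_eq f N le_rfl hO]
      unfold intAux
      rfl
    rw [hphi] at hf
    have hind : (N.index : ℚ) ≠ 0 := by exact_mod_cast index_ne_zero hO
    have := (div_eq_zero_iff.mp hf).resolve_right hind
    exact_mod_cast this
  have hrw : f = ∑ y : J ⧸ N, c y • (T y - indLC N hO) := by
    calc f = ∑ y : J ⧸ N, c y • T y := hdecomp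
      _ = ∑ y : J ⧸ N, (c y • (T y - indLC N hO) + c y • indLC N hO) := by
          apply Finset.sum_congr rfl
          intro y _
          rw [smul_sub]
          abel
      _ = (∑ y : J ⧸ N, c y • (T y - indLC N hO)) + (∑ y : J ⧸ N, c y) • indLC N hO := by
          rw [Finset.sum_add_distrib, ← Finset.sum_smul]
      _ = ∑ y : J ⧸ N, c y • (T y - indLC N hO) := by rw [hsum0, zero_smul, add_zero]
  rw [hrw]
  apply AddSubgroup.sum_mem
  intro y _
  apply AddSubgroup.zsmul_mem
  exact AddSubgroup.subset_closure ⟨y.out, indLC N hO, rfl⟩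

theorem exists_openSubgroup_subset [T2Space J] [TotallyDisconnectedSpace J] {U : Set J}
    (hU : IsOpen U) (h1 : (1 : J) ∈ U) :
    ∃ N : Subgroup J, IsOpen (N : Set J) ∧ (N : Set J) ⊆ U := by
  obtain ⟨W, hWclopen, h1W, hWU⟩ :=
    isTopologicalBasis_isClopen.mem_nhds_iff.mp (hU.mem_nhds h1)
  obtain ⟨H, hH⟩ := IsTopologicalGroup.exist_openSubgroup_sub_clopen_nhds_of_one hWclopen h1W
  exact ⟨H.toSubgroup, H.isOpen, hH.trans hWU⟩

theorem exists_index_ge (p : ℕ) [Fact p.Prime] [T2Space J] [TotallyDisconnectedSpace J]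
    [Infinite J]
    (hJp : ∀ U : Subgroup J, IsOpen (U : Set J) → ∃ n : ℕ, U.index = p ^ n) (n : ℕ) :
    ∃ (N : Subgroup J) (m : ℕ), IsOpen (N : Set J) ∧ N.index = p ^ m ∧ n ≤ m := by
  have hp1 : 1 < p := (Fact.out : p.Prime).one_lt
  by_contra hcon
  push_neg at hcon
  set S : Set ℕ := {m | ∃ N : Subgroup J, IsOpen (N : Set J) ∧ N.index = p ^ m} with hS
  have h0S : 0 ∈ S := ⟨⊤, by rw [Subgroup.coe_top]; exact isOpen_univ,
    by rw [Subgroup.index_top, pow_zero]⟩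
  have hSbdd : BddAbove S := by
    refine ⟨n, fun m hm => ?_⟩
    obtain ⟨N, hNo, hNi⟩ := hm
    exact le_of_lt (hcon N m hNo hNi)
  set m₀ := sSup S with hm₀
  obtain ⟨N₀, hN₀o, hN₀i⟩ : m₀ ∈ S := Nat.sSup_mem ⟨0, h0S⟩ hSbdd
  have hle : ∀ N' : Subgroup J, IsOpen (N' : Set J) → N₀ ≤ N' := by
    intro N' hN'o
    have hio : IsOpen ((N₀ ⊓ N' : Subgroup J) : Set J) := by
      rw [Subgroup.coe_inf]; exact hN₀o.inter hN'o
    obtain ⟨m', hm'⟩ := hJp (N₀ ⊓ N') hio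
    have hm'S : m' ∈ S := ⟨N₀ ⊓ N', hio, hm'⟩
    have h1 : m' ≤ m₀ := le_csSup hSbdd hm'S
    have hdvd : N₀.index ∣ (N₀ ⊓ N').index := Subgroup.index_dvd_of_le inf_le_left
    rw [hN₀i, hm'] at hdvd
    have h2 : m₀ ≤ m' := (Nat.pow_dvd_pow_iff_le_right hp1).mp hdvd
    have heq : (N₀ ⊓ N').index = N₀.index := by rw [hN₀i, hm', le_antisymm h1 h2]
    have hrel := Subgroup.relIndex_mul_index (inf_le_left : N₀ ⊓ N' ≤ N₀)
    rw [heq] at hrel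
    have hpos : 0 < N₀.index := Nat.pos_of_ne_zero (index_ne_zero hN₀o)
    have hone : (N₀ ⊓ N').relIndex N₀ = 1 := by
      have := Nat.eq_of_mul_eq_mul_right hpos (hrel.trans (one_mul N₀.index).symm)
      exact this
    have := Subgroup.relIndex_eq_one.mp hone
    exact le_trans this inf_le_right
  have hbot : N₀ = ⊥ := by
    rw [eq_bot_iff]
    intro x hx
    by_contra hx1
    have hx1' : x ≠ 1 := hx1
    have hopen : IsOpen ({x}ᶜ : Set J) := isClosed_singleton.isOpen_compl
    obtain ⟨N', hN'o, hN'sub⟩ := exists_openSubgroup_subset hopen (by simp [Ne.symm hx1'])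
    exact hN'sub (hle N' hN'o hx) rfl
  rw [hbot, Subgroup.index_bot, Nat.card_eq_zero_of_infinite] at hN₀i
  exact (pow_pos (Nat.lt_of_lt_of_le Nat.zero_lt_one hp1.le) m₀).ne' hN₀i.symm

theorem phi_num (f : LocallyConstant J ℤ) :
    ∃ S : ℤ, phi f = (S : ℚ) / (((stab f).index : ℕ) : ℚ) := by
  refine ⟨?_, ?_⟩
  · exact
      letI : Finite (J ⧸ stab f) := (stab f).quotient_finite_of_isOpen (stab_isOpen f)
      letI : Fintype (J ⧸ stab f) := Fintype.ofFinite _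
      ∑ y : J ⧸ stab f, qlift f (stab f) le_rfl y
  · rfl

end Aux

/-- Let `J` be an infinite profinite pro-`p` group (every open subgroup has `p`-power
index). Then the `J`-coinvariants of the smooth representation `C_c^∞(J, ℤ)` of `J`
(locally constant `ℤ`-valued functions on `J`, with `J` acting by left translation) is
isomorphic to `ℤ[1/p]`, via the Haar measure normalized so that the characteristic
function of `J` (i.e. the constant function `1`) has measure `1`. -/
theorem stmt6 (p : ℕ) [Fact p.Prime] (J : Type*) [Group J] [TopologicalSpace J]
    [IsTopologicalGroup J] [CompactSpace J] [TotallyDisconnectedSpace J] [T2Space J]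
    [Infinite J]
    (hJp : ∀ U : Subgroup J, IsOpen (U : Set J) → ∃ n : ℕ, U.index = p ^ n) :
    ∃ e : (LocallyConstant J ℤ ⧸ coinvariantsSub J) ≃+ Localization.Away (p : ℤ),
      e (QuotientAddGroup.mk (LocallyConstant.const J (1 : ℤ))) = 1 := by
  have hp0 : (p : ℚ) ≠ 0 := Nat.cast_ne_zero.mpr (Fact.out : p.Prime).pos.ne'
  have hv : (Int.castRingHom ℚ) (p : ℤ) * (p : ℚ)⁻¹ = 1 := by
    simp [mul_inv_cancel₀ hp0]
  set L : Localization.Away (p : ℤ) →+* ℚ :=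
    Localization.awayLift (Int.castRingHom ℚ) (p : ℤ)
      (isUnit_iff_exists_inv.mpr ⟨(p : ℚ)⁻¹, hv⟩) with hL
  have hLmk : ∀ (a : ℤ) (n : ℕ),
      L (Localization.mk a ⟨(p : ℤ) ^ n, n, rfl⟩) = (a : ℚ) / (p : ℚ) ^ n := by
    intro a n
    rw [hL, Localization.awayLift_mk (Int.castRingHom ℚ) (p : ℤ) a ((p : ℚ)⁻¹) hv n]
    simp [inv_pow, div_eq_mul_inv]
  set L' : Localization.Away (p : ℤ) →+ ℚ := L.toAddMonoidHom with hL'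
  have hrep : ∀ x : Localization.Away (p : ℤ),
      ∃ (a : ℤ) (n : ℕ), x = Localization.mk a
        (⟨(p : ℤ) ^ n, n, rfl⟩ : Submonoid.powers (p : ℤ)) := by
    intro x
    induction x using Localization.induction_on with
    | H d =>
      obtain ⟨a, s⟩ := d
      obtain ⟨n, hn⟩ := s.2
      exact ⟨a, n, by congr 1; exact Subtype.ext hn.symm⟩
  have hinj : Function.Injective L' := by
    rw [injective_iff_map_eq_zero]
    intro x hx
    obtain ⟨a, n, rfl⟩ := hrep x
    have : (a : ℚ) / (p : ℚ) ^ n = 0 := by rw [← hLmk a n]; exact hx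
    have ha : (a : ℚ) = 0 :=
      (div_eq_zero_iff.mp this).resolve_right (pow_ne_zero n hp0)
    have ha' : a = 0 := by exact_mod_cast ha
    rw [ha']
    exact Localization.mk_zero _
  have hkereq : (Phi (J := J)).ker = coinvariantsSub J := by
    apply le_antisymm
    · intro f hf
      exact mem_coinvariants_of_phi_eq_zero f hf
    · exact coinvariants_le_ker_Phi
  have hrange : (Phi (J := J)).range = L'.range := by
    apply le_antisymm
    · rintro q ⟨f, rfl⟩
      obtain ⟨n, hn⟩ := hJp (stab f) (stab_isOpen f)
      obtain ⟨S, hS⟩ := phi_num f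
      rw [AddMonoidHom.mem_range]
      refine ⟨Localization.mk S ⟨(p : ℤ) ^ n, n, rfl⟩, ?_⟩
      show L _ = Phi f
      rw [hLmk S n, Phi_apply, hS, hn]
      push_cast
      ring
    · rintro q ⟨x, rfl⟩
      obtain ⟨a, n, rfl⟩ := hrep x
      obtain ⟨N, m, hNo, hNi, hnm⟩ := exists_index_ge p hJp n
      rw [AddMonoidHom.mem_range]
      refine ⟨(a * (p : ℤ) ^ (m - n)) • indLC N hNo, ?_⟩
      show Phi _ = L _
      rw [hLmk a n, Phi_apply]
      have hz : phi ((a * (p : ℤ) ^ (m - n)) • indLC N hNo)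
          = ((a * (p : ℤ) ^ (m - n) : ℤ) : ℚ) * phi (indLC N hNo) := by
        have h2 := map_zsmul (Phi (J := J)) (a * (p : ℤ) ^ (m - n)) (indLC N hNo)
        rw [Phi_apply, Phi_apply] at h2
        rw [h2, zsmul_eq_mul]
      rw [hz, phi_indLC N hNo, hNi]
      have hm' : (m - n) + n = m := Nat.sub_add_cancel hnm
      push_cast
      rw [mul_one_div, div_eq_div_iff (pow_ne_zero m hp0) (pow_ne_zero n hp0)]
      rw [mul_assoc, ← pow_add, hm']
  -- assemble the equivalence
  letI A : (LocallyConstant J ℤ ⧸ coinvariantsSub J) ≃+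
      (LocallyConstant J ℤ ⧸ (Phi (J := J)).ker) :=
    QuotientAddGroup.quotientAddEquivOfEq hkereq.symm
  letI B : (LocallyConstant J ℤ ⧸ (Phi (J := J)).ker) ≃+ (Phi (J := J)).range :=
    QuotientAddGroup.quotientKerEquivRange (Phi (J := J))
  letI C : ((Phi (J := J)).range : AddSubgroup ℚ) ≃+ (L'.range : AddSubgroup ℚ) :=
    AddEquiv.addSubgroupCongr hrange
  letI D : (L'.range : AddSubgroup ℚ) ≃+ Localization.Away (p : ℤ) :=
    (AddMonoidHom.ofInjective hinj).symm
  refine ⟨((A.trans B).trans C).trans D, ?_⟩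
  have hA : A (QuotientAddGroup.mk (LocallyConstant.const J (1 : ℤ)))
      = QuotientAddGroup.mk (LocallyConstant.const J (1 : ℤ)) := rfl
  have hB : ((B (QuotientAddGroup.mk (LocallyConstant.const J (1 : ℤ)))) : ℚ)
      = Phi (LocallyConstant.const J (1 : ℤ)) := rfl
  have hC : ∀ v : ((Phi (J := J)).range : AddSubgroup ℚ), ((C v : L'.range) : ℚ) = (v : ℚ) :=
    fun v => rfl
  simp only [AddEquiv.trans_apply, hA]
  show (AddMonoidHom.ofInjective hinj).symm (C (B (QuotientAddGroup.mk
    (LocallyConstant.const J (1 : ℤ))))) = 1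
  rw [AddEquiv.symm_apply_eq]
  apply Subtype.ext
  rw [hC]
  rw [hB, Phi_apply, phi_const_one]
  show (1 : ℚ) = ((AddMonoidHom.ofInjective hinj) 1 : ℚ)
  have h3 : ((AddMonoidHom.ofInjective hinj) 1 : ℚ) = L' 1 := rfl
  rw [h3, hL']
  simp
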